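/- Convexity of the hitting-probability product (proof of Theorem 5.3): For all reals R, α > 0 and every n ≥ 1, the function (d_1, …, d_n) ↦ ∏_{t=1}^n R/(R + d_t·α) is convex on the set {d ∈ ℝⁿ : d_t ≥ 0 for all t}. -/

import Mathlib

open Real Set

private noncomputable def affT {n : ℕ} (R α : ℝ) (t : Fin n) :
    (Fin n → ℝ) →ᵃ[ℝ] ℝ where
  toFun := fun d => R + d t * α
  linear := α • LinearMap.proj t
  map_vadd' := by
    intro p v
    simp [vadd_eq_add]
    ring

/-- Convexity of the hitting-probability product (proof of Theorem 5.3):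
for `R, α > 0` and `n ≥ 1`, the function `d ↦ ∏ t, R/(R + d t·α)` is convex
on the nonnegative orthant. -/
theorem stmt_16 (R α : ℝ) (hR : 0 < R) (hα : 0 < α) (n : ℕ) (hn : 1 ≤ n) :
    ConvexOn ℝ {d : Fin n → ℝ | ∀ t, 0 ≤ d t}
      (fun d : Fin n → ℝ => ∏ t, R / (R + d t * α)) := by
  set S : Set (Fin n → ℝ) := {d : Fin n → ℝ | ∀ t, 0 ≤ d t} with hS
  have hSconv : Convex ℝ S := by
    have : S = Set.pi Set.univ (fun _ : Fin n => Ici (0 : ℝ)) := by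
      ext d; simp [hS, Set.mem_pi, Pi.le_def]
    rw [this]
    exact convex_pi fun i _ => convex_Ici 0
  have hpos : ∀ d ∈ S, ∀ t : Fin n, 0 < R + d t * α := by
    intro d hd t
    have := hd t
    positivity
  -- the log-sum function
  set g : (Fin n → ℝ) → ℝ :=
    fun d => ∑ t, (Real.log R - Real.log (R + d t * α)) with hg
  have hsum : ∀ (F : Fin n → (Fin n → ℝ) → ℝ),
      (∀ t, ConvexOn ℝ S (F t)) →
      ConvexOn ℝ S (fun d => ∑ t, F t d) := by
    intro F hF
    classical
    induction (Finset.univ : Finset (Fin n)) using Finset.induction with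
    | empty => simpa using convexOn_const 0 hSconv
    | insert _ _ hnot ih =>
      simp only [Finset.sum_insert hnot]
      exact (hF _).add ih
  have hgconv : ConvexOn ℝ S g := by
    apply hsum
    intro t
    have hneglog : ConvexOn ℝ (Ioi (0 : ℝ)) (fun x => -Real.log x) :=
      strictConcaveOn_log_Ioi.concaveOn.neg
    have hcomp :
        ConvexOn ℝ ((affT R α t) ⁻¹' (Ioi (0 : ℝ)))
          ((fun x => -Real.log x) ∘ (affT R α t)) :=
      hneglog.comp_affineMap (affT R α t)
    have hsub : S ⊆ (affT R α t) ⁻¹' (Ioi (0 : ℝ)) := by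
      intro d hd
      exact hpos d hd t
    have := (hcomp.subset hsub hSconv).add_const (Real.log R)
    refine this.congr ?_
    intro d _
    simp [affT, Function.comp]
    ring
  -- exp ∘ g is convex on S
  have hexp : ConvexOn ℝ S (fun d => Real.exp (g d)) := by
    refine ⟨hSconv, fun x hx y hy a b ha hb hab => ?_⟩
    calc Real.exp (g (a • x + b • y))
        ≤ Real.exp (a * g x + b * g y) := by
          exact Real.exp_le_exp.2 (hgconv.2 hx hy ha hb hab)
      _ ≤ a * Real.exp (g x) + b * Real.exp (g y) :=
          convexOn_exp.2 (Set.mem_univ _) (Set.mem_univ _) ha hb hab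
      _ = a • Real.exp (g x) + b • Real.exp (g y) := by simp
  refine hexp.congr ?_
  intro d hd
  simp only [hg]
  rw [Real.exp_sum]
  refine Finset.prod_congr rfl ?_
  intro t _
  rw [Real.exp_sub, Real.exp_log hR, Real.exp_log (hpos d hd t)]
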